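/- Let F be an algebraically closed field of characteristic 3 and let L = Br_8 be the 8-dimensional Brown algebra over F defined by the explicit bracket table below. Then L is a simple Lie algebra with trivial center. -/

import Mathlib

noncomputable section

/-- The (0-indexed) pairs `(i,j)` for which the bracket `[x_{i+1}, x_{j+1}]` of basis
vectors of the Brown algebra `Br₈` is listed as nonzero; all brackets of basis vectors
not obtained from these by antisymmetry vanish. -/
def br8Pairs : List (ℕ × ℕ) :=
  [(0, 1), (0, 3), (0, 4), (0, 6), (1, 2), (1, 4), (1, 5), (1, 6), (1, 7), (2, 3),
    (2, 5), (2, 6), (3, 4), (3, 6), (4, 5), (4, 6), (4, 7), (5, 6)]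

/-- The 8-dimensional Brown algebra `Br₈` over an algebraically closed field of
characteristic `3` (presented by its basis `x₁, …, x₈` and the explicit bracket table)
is a simple Lie algebra with trivial center. -/
theorem br8_isSimple_and_center_eq_bot
    (F : Type*) [Field F] [IsAlgClosed F] [CharP F 3]
    (L : Type*) [LieRing L] [LieAlgebra F L]
    (x : Fin 8 → L)
    (bL : Module.Basis (Fin 8) F L) (hbL : ∀ i, bL i = x i)
    (h12 : ⁅x 0, x 1⁆ = x 6)
    (h14 : ⁅x 0, x 3⁆ = (2 : F) • x 5)
    (h15 : ⁅x 0, x 4⁆ = x 2)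
    (h17 : ⁅x 0, x 6⁆ = x 0)
    (h23 : ⁅x 1, x 2⁆ = x 4)
    (h25 : ⁅x 1, x 4⁆ = x 7)
    (h26 : ⁅x 1, x 5⁆ = (2 : F) • x 3)
    (h27 : ⁅x 1, x 6⁆ = (2 : F) • x 1)
    (h28 : ⁅x 1, x 7⁆ = (2 : F) • x 5)
    (h34 : ⁅x 2, x 3⁆ = (2 : F) • x 6)
    (h36 : ⁅x 2, x 5⁆ = x 0)
    (h37 : ⁅x 2, x 6⁆ = (2 : F) • x 2)
    (h45 : ⁅x 3, x 4⁆ = (2 : F) • x 1)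
    (h47 : ⁅x 3, x 6⁆ = x 3)
    (h56 : ⁅x 4, x 5⁆ = x 6)
    (h57 : ⁅x 4, x 6⁆ = x 4)
    (h58 : ⁅x 4, x 7⁆ = x 0)
    (h67 : ⁅x 5, x 6⁆ = (2 : F) • x 5)
    (hzero : ∀ i j : Fin 8, ((i : ℕ), (j : ℕ)) ∉ br8Pairs →
      ((j : ℕ), (i : ℕ)) ∉ br8Pairs → ⁅x i, x j⁆ = 0)
    : LieAlgebra.IsSimple F L ∧ LieAlgebra.center F L = ⊥ := by
  have h2 : (2 : F) = -1 := by
    have h3 : (3 : F) = 0 := by exact_mod_cast CharP.cast_eq_zero F 3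
    linear_combination h3
  rw [h2] at h14 h26 h27 h28 h34 h37 h45 h67
  -- zero brackets we need
  have z02 : ⁅x 0, x 2⁆ = 0 := hzero 0 2 (by decide) (by decide)
  have z05 : ⁅x 0, x 5⁆ = 0 := hzero 0 5 (by decide) (by decide)
  have z31 : ⁅x 3, x 1⁆ = 0 := hzero 3 1 (by decide) (by decide)
  have z35 : ⁅x 3, x 5⁆ = 0 := hzero 3 5 (by decide) (by decide)
  have z20 : ⁅x 2, x 0⁆ = 0 := hzero 2 0 (by decide) (by decide)
  have z24 : ⁅x 2, x 4⁆ = 0 := hzero 2 4 (by decide) (by decide)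
  have z50 : ⁅x 5, x 0⁆ = 0 := hzero 5 0 (by decide) (by decide)
  have z53 : ⁅x 5, x 3⁆ = 0 := hzero 5 3 (by decide) (by decide)
  have b67 : ⁅x 6, x 7⁆ = 0 := hzero 6 7 (by decide) (by decide)
  -- brackets obtained by antisymmetry
  have b60 : ⁅x 6, x 0⁆ = -x 0 := by rw [← lie_skew, h17]
  have b61 : ⁅x 6, x 1⁆ = x 1 := by rw [← lie_skew, h27]; module
  have b62 : ⁅x 6, x 2⁆ = x 2 := by rw [← lie_skew, h37]; module
  have b63 : ⁅x 6, x 3⁆ = -x 3 := by rw [← lie_skew, h47]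
  have b64 : ⁅x 6, x 4⁆ = -x 4 := by rw [← lie_skew, h57]
  have b65 : ⁅x 6, x 5⁆ = x 5 := by rw [← lie_skew, h67]; module
  have b66 : ⁅x 6, x 6⁆ = 0 := lie_self _
  have b32 : ⁅x 3, x 2⁆ = x 6 := by rw [← lie_skew, h34]; module
  have b54 : ⁅x 5, x 4⁆ = -x 6 := by rw [← lie_skew, h56]
  have b10 : ⁅x 1, x 0⁆ = -x 6 := by rw [← lie_skew, h12]
  have hx0ne : x 0 ≠ 0 := by rw [← hbL]; exact bL.ne_zero 0
  have hnonab : ¬ IsLieAbelian L := by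
    intro h
    exact hx0ne (h17 ▸ trivial_lie_zero L L (x 0) (x 6))
  -- Main step: every nonzero ideal is everything.
  have key : ∀ I : LieIdeal F L, I ≠ ⊥ → I = ⊤ := by
    intro I hI
    obtain ⟨y, hyI, hy0⟩ : ∃ y ∈ I, y ≠ 0 := by
      have := mt (LieSubmodule.eq_bot_iff I).mpr hI
      push_neg at this
      exact this
    set c : Fin 8 → F := fun i => bL.repr y i with hc
    have hy : y = c 0 • x 0 + c 1 • x 1 + c 2 • x 2 + c 3 • x 3 + c 4 • x 4 + c 5 • x 5
        + c 6 • x 6 + c 7 • x 7 := by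
      conv_lhs => rw [← bL.sum_repr y]
      rw [Fin.sum_univ_eight]
      simp only [hbL, hc]
    have m1 : ⁅x 6, y⁆ ∈ I := I.lie_mem hyI
    have m2 : ⁅x 6, ⁅x 6, y⁆⁆ ∈ I := I.lie_mem m1
    have hfy : ⁅x 6, y⁆ = (-(c 0)) • x 0 + c 1 • x 1 + c 2 • x 2 + (-(c 3)) • x 3
        + (-(c 4)) • x 4 + c 5 • x 5 := by
      conv_lhs => rw [hy]
      simp only [lie_add, lie_smul, b60, b61, b62, b63, b64, b65, b66, b67, smul_zero,
        add_zero, smul_neg]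
      module
    have hf2y : ⁅x 6, ⁅x 6, y⁆⁆ = c 0 • x 0 + c 1 • x 1 + c 2 • x 2 + c 3 • x 3
        + c 4 • x 4 + c 5 • x 5 := by
      rw [hfy]
      simp only [lie_add, lie_smul, b60, b61, b62, b63, b64, b65, smul_neg]
      module
    have extract : ∀ (a : F) (z : L), a ≠ 0 → a • z ∈ I → z ∈ I := by
      intro a z ha h
      have := I.smul_mem a⁻¹ h
      rwa [inv_smul_smul₀ ha] at this
    have hx0x6 : x 0 ∈ I → x 6 ∈ I := by
      intro h0
      have h := I.lie_mem (x := x 1) h0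
      rw [b10] at h
      exact neg_mem_iff.mp h
    have stepV1 : ∀ a b c' : F, a • x 1 + b • x 2 + c' • x 5 ∈ I →
        (a ≠ 0 ∨ b ≠ 0 ∨ c' ≠ 0) → x 6 ∈ I := by
      intro a b c' hv hne
      by_cases ha : a = 0
      · by_cases hb : b = 0
        · have hc' : c' ≠ 0 := by
            rcases hne with h | h | h
            exacts [absurd ha h, absurd hb h, h]
          have h5 : x 5 ∈ I := extract c' _ hc' (by
            have e : c' • x 5 = a • x 1 + b • x 2 + c' • x 5 := by rw [ha, hb]; module
            rwa [e])
          have h0 : x 0 ∈ I := by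
            have h := I.lie_mem (x := x 2) h5
            rwa [h36] at h
          exact hx0x6 h0
        · have h := I.lie_mem (x := x 3) hv
          have e : ⁅x 3, a • x 1 + b • x 2 + c' • x 5⁆ = b • x 6 := by
            simp only [lie_add, lie_smul, b32, z31, z35, smul_zero, zero_add, add_zero]
          rw [e] at h
          exact extract b _ hb h
      · have h := I.lie_mem (x := x 0) hv
        have e : ⁅x 0, a • x 1 + b • x 2 + c' • x 5⁆ = a • x 6 := by
          simp only [lie_add, lie_smul, h12, z02, z05, smul_zero, add_zero]
        rw [e] at h
        exact extract a _ ha h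
    have stepV2 : ∀ a b c' : F, a • x 0 + b • x 3 + c' • x 4 ∈ I →
        (a ≠ 0 ∨ b ≠ 0 ∨ c' ≠ 0) → x 6 ∈ I := by
      intro a b c' hw hne
      by_cases hb : b = 0
      · by_cases hc' : c' = 0
        · have ha : a ≠ 0 := by
            rcases hne with h | h | h
            exacts [h, absurd hb h, absurd hc' h]
          have h0 : x 0 ∈ I := extract a _ ha (by
            have e : a • x 0 = a • x 0 + b • x 3 + c' • x 4 := by rw [hb, hc']; module
            rwa [e])
          exact hx0x6 h0
        · have h := I.lie_mem (x := x 5) hw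
          have e : ⁅x 5, a • x 0 + b • x 3 + c' • x 4⁆ = (-c') • x 6 := by
            simp only [lie_add, lie_smul, z50, z53, b54, smul_zero, smul_neg, zero_add]
            module
          rw [e] at h
          exact extract (-c') _ (neg_ne_zero.mpr hc') h
      · have h := I.lie_mem (x := x 2) hw
        have e : ⁅x 2, a • x 0 + b • x 3 + c' • x 4⁆ = (-b) • x 6 := by
          simp only [lie_add, lie_smul, z20, z24, h34, smul_zero, zero_add, add_zero]
          module
        rw [e] at h
        exact extract (-b) _ (neg_ne_zero.mpr hb) h
    have h2ne : (2 : F) ≠ 0 := by rw [h2]; exact neg_ne_zero.mpr one_ne_zero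
    have hx6 : x 6 ∈ I := by
      have hdisj : (c 1 ≠ 0 ∨ c 2 ≠ 0 ∨ c 5 ≠ 0) ∨ (c 0 ≠ 0 ∨ c 3 ≠ 0 ∨ c 4 ≠ 0)
          ∨ (c 6 ≠ 0 ∨ c 7 ≠ 0) := by
        by_contra hcon
        push_neg at hcon
        obtain ⟨⟨e1, e2, e5⟩, ⟨e0, e3, e4⟩, e6, e7⟩ := hcon
        apply hy0
        rw [hy, e0, e1, e2, e3, e4, e5, e6, e7]
        simp
      rcases hdisj with h | h | h
      · have hu : ((2:F) * c 1) • x 1 + ((2:F) * c 2) • x 2 + ((2:F) * c 5) • x 5 ∈ I := by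
          have e : ⁅x 6, ⁅x 6, y⁆⁆ + ⁅x 6, y⁆
              = ((2:F) * c 1) • x 1 + ((2:F) * c 2) • x 2 + ((2:F) * c 5) • x 5 := by
            rw [hf2y, hfy]; module
          rw [← e]
          exact add_mem m2 m1
        apply stepV1 _ _ _ hu
        rcases h with h | h | h
        exacts [Or.inl (mul_ne_zero h2ne h), Or.inr (Or.inl (mul_ne_zero h2ne h)),
          Or.inr (Or.inr (mul_ne_zero h2ne h))]
      · have hu : ((2:F) * c 0) • x 0 + ((2:F) * c 3) • x 3 + ((2:F) * c 4) • x 4 ∈ I := by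
          have e : ⁅x 6, ⁅x 6, y⁆⁆ - ⁅x 6, y⁆
              = ((2:F) * c 0) • x 0 + ((2:F) * c 3) • x 3 + ((2:F) * c 4) • x 4 := by
            rw [hf2y, hfy]; module
          rw [← e]
          exact sub_mem m2 m1
        apply stepV2 _ _ _ hu
        rcases h with h | h | h
        exacts [Or.inl (mul_ne_zero h2ne h), Or.inr (Or.inl (mul_ne_zero h2ne h)),
          Or.inr (Or.inr (mul_ne_zero h2ne h))]
      · have hy0' : c 6 • x 6 + c 7 • x 7 ∈ I := by
          have e : y - ⁅x 6, ⁅x 6, y⁆⁆ = c 6 • x 6 + c 7 • x 7 := by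
            conv_lhs => rw [hf2y, hy]
            module
          rw [← e]
          exact sub_mem hyI m2
        have h' := I.lie_mem (x := x 1) hy0'
        have e2 : ⁅x 1, c 6 • x 6 + c 7 • x 7⁆
            = (-(c 6)) • x 1 + (0:F) • x 2 + (-(c 7)) • x 5 := by
          simp only [lie_add, lie_smul, h27, h28]
          module
        rw [e2] at h'
        apply stepV1 _ _ _ h'
        rcases h with h | h
        exacts [Or.inl (neg_ne_zero.mpr h), Or.inr (Or.inr (neg_ne_zero.mpr h))]
    have hx0 : x 0 ∈ I := by
      have h := I.lie_mem (x := x 0) hx6; rwa [h17] at h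
    have hx1 : x 1 ∈ I := by
      have h := I.lie_mem (x := x 1) hx6; rw [h27] at h
      exact extract _ _ (neg_ne_zero.mpr one_ne_zero) h
    have hx2 : x 2 ∈ I := by
      have h := I.lie_mem (x := x 2) hx6; rw [h37] at h
      exact extract _ _ (neg_ne_zero.mpr one_ne_zero) h
    have hx3 : x 3 ∈ I := by
      have h := I.lie_mem (x := x 3) hx6; rwa [h47] at h
    have hx4 : x 4 ∈ I := by
      have h := I.lie_mem (x := x 4) hx6; rwa [h57] at h
    have hx5 : x 5 ∈ I := by
      have h := I.lie_mem (x := x 5) hx6; rw [h67] at h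
      exact extract _ _ (neg_ne_zero.mpr one_ne_zero) h
    have hx7 : x 7 ∈ I := by
      have h := I.lie_mem (x := x 1) hx4; rwa [h25] at h
    have hall : ∀ i : Fin 8, x i ∈ I := by
      intro i; fin_cases i <;> assumption
    rw [eq_top_iff]
    intro m _
    have hm : (∑ i, bL.repr m i • bL i) ∈ I :=
      sum_mem fun i _ => I.smul_mem _ (by rw [hbL]; exact hall i)
    rwa [bL.sum_repr m] at hm
  have hs : LieAlgebra.IsSimple F L :=
    ⟨fun I => or_iff_not_imp_left.mpr (key I), hnonab⟩
  refine ⟨hs, ?_⟩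
  rcases hs.eq_bot_or_eq_top (LieAlgebra.center F L) with h | h
  · exact h
  · exact absurd ((LieAlgebra.isLieAbelian_iff_center_eq_top F L).mpr h) hnonab
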